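/- Let λ, μ be reals with 0 < 2μ < λ and let θ : [0,∞) → (0,∞) be a decreasing function. Then the family of 2×2 matrices Q₆^{[s,t]}(λ,μ) with entries Q₁₁ = 1 − ((λ−2μ)/(2(λ−μ)))(1 − θ(t)/θ(s)), Q₁₂ = ((λ−2μ)/(2(λ−μ)))(1 − θ(t)/θ(s)), Q₂₁ = (λ/(2(λ−μ)))(1 − θ(t)/θ(s)), Q₂₂ = 1 − (λ/(2(λ−μ)))(1 − θ(t)/θ(s)) is right stochastic for 0 ≤ s < t and satisfies the Kolmogorov–Chapman equation Q₆^{[s,t]} = Q₆^{[s,τ]} Q₆^{[τ,t]} for all 0 ≤ s < τ < t. -/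

import Mathlib

/-- The family Q₆^{[s,t]}(λ,μ) is right stochastic and satisfies the
Kolmogorov–Chapman equation. -/
theorem Q6_right_stochastic_and_KCE (lam mu : ℝ) (hmu : 0 < 2 * mu) (hlam : 2 * mu < lam)
    (θ : ℝ → ℝ)
    (hθpos : ∀ t, 0 ≤ t → 0 < θ t)
    (hθdec : ∀ s t, 0 ≤ s → s ≤ t → θ t ≤ θ s) :
    (∀ s t : ℝ, 0 ≤ s → s < t →
        (∀ i j, 0 ≤ (!![1 - (lam - 2*mu)/(2*(lam - mu)) * (1 - θ t / θ s),
                        (lam - 2*mu)/(2*(lam - mu)) * (1 - θ t / θ s);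
                        lam/(2*(lam - mu)) * (1 - θ t / θ s),
                        1 - lam/(2*(lam - mu)) * (1 - θ t / θ s)]
            : Matrix (Fin 2) (Fin 2) ℝ) i j) ∧
        (∀ i, ∑ j, (!![1 - (lam - 2*mu)/(2*(lam - mu)) * (1 - θ t / θ s),
                        (lam - 2*mu)/(2*(lam - mu)) * (1 - θ t / θ s);
                        lam/(2*(lam - mu)) * (1 - θ t / θ s),
                        1 - lam/(2*(lam - mu)) * (1 - θ t / θ s)]
            : Matrix (Fin 2) (Fin 2) ℝ) i j = 1)) ∧
      (∀ s τ t : ℝ, 0 ≤ s → s < τ → τ < t →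
        (!![1 - (lam - 2*mu)/(2*(lam - mu)) * (1 - θ t / θ s),
            (lam - 2*mu)/(2*(lam - mu)) * (1 - θ t / θ s);
            lam/(2*(lam - mu)) * (1 - θ t / θ s),
            1 - lam/(2*(lam - mu)) * (1 - θ t / θ s)] : Matrix (Fin 2) (Fin 2) ℝ) =
          !![1 - (lam - 2*mu)/(2*(lam - mu)) * (1 - θ τ / θ s),
             (lam - 2*mu)/(2*(lam - mu)) * (1 - θ τ / θ s);
             lam/(2*(lam - mu)) * (1 - θ τ / θ s),
             1 - lam/(2*(lam - mu)) * (1 - θ τ / θ s)] *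
          !![1 - (lam - 2*mu)/(2*(lam - mu)) * (1 - θ t / θ τ),
             (lam - 2*mu)/(2*(lam - mu)) * (1 - θ t / θ τ);
             lam/(2*(lam - mu)) * (1 - θ t / θ τ),
             1 - lam/(2*(lam - mu)) * (1 - θ t / θ τ)]) := by
  have hlm : (0:ℝ) < 2 * (lam - mu) := by linarith
  refine ⟨fun s t hs hst => ?_, fun s τ t hs hsτ hτt => ?_⟩
  · have hθs := hθpos s hs
    have hθt := hθpos t (by linarith)
    have hx1 : θ t / θ s ≤ 1 := by
      rw [div_le_one hθs]; exact hθdec s t hs hst.le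
    have hx0 : 0 < θ t / θ s := div_pos hθt hθs
    have ha0 : 0 ≤ (lam - 2*mu)/(2*(lam - mu)) := div_nonneg (by linarith) hlm.le
    have ha1 : (lam - 2*mu)/(2*(lam - mu)) ≤ 1 := by rw [div_le_one hlm]; linarith
    have hb0 : 0 ≤ lam/(2*(lam - mu)) := div_nonneg (by linarith) hlm.le
    have hb1 : lam/(2*(lam - mu)) ≤ 1 := by rw [div_le_one hlm]; linarith
    constructor
    · intro i j
      fin_cases i <;> fin_cases j <;> simp <;>
        nlinarith [mul_nonneg ha0 (by linarith : (0:ℝ) ≤ 1 - θ t / θ s),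
          mul_nonneg hb0 (by linarith : (0:ℝ) ≤ 1 - θ t / θ s),
          mul_le_one₀ ha1 (by linarith : (0:ℝ) ≤ 1 - θ t / θ s) (by linarith),
          mul_le_one₀ hb1 (by linarith : (0:ℝ) ≤ 1 - θ t / θ s) (by linarith)]
    · intro i
      fin_cases i <;>
        simp [Fin.sum_univ_two]
  · have hθs := (hθpos s hs).ne'
    have hθτ := (hθpos τ (by linarith)).ne'
    have hne : (2:ℝ) * (lam - mu) ≠ 0 := hlm.ne'
    set a := (lam - 2*mu)/(2*(lam - mu)) with ha
    set b := lam/(2*(lam - mu)) with hb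
    have hab : a + b = 1 := by rw [ha, hb, ← add_div, div_eq_one_iff_eq hne]; ring
    have hrq : θ t / θ s = (θ τ / θ s) * (θ t / θ τ) := by field_simp
    rw [hrq, Matrix.mul_fin_two]
    set r := θ τ / θ s
    set q := θ t / θ τ
    ext i j
    fin_cases i <;> fin_cases j <;> simp <;>
      first
        | linear_combination (a*(1-r)*(1-q))*hab
        | linear_combination (-(a*(1-r)*(1-q)))*hab
        | linear_combination (b*(1-r)*(1-q))*hab
        | linear_combination (-(b*(1-r)*(1-q)))*hab
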